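/- Let X be a real linear n-normed space and M a total subset of X*_F (i.e., the closed linear span of M is X*_F). A sequence {x_k} in X converges b-weakly to x ∈ X if and only if (I) {‖x_k, b₂, ..., bₙ‖} is bounded and (II) T(x_k, b₂, ..., bₙ) → T(x, b₂, ..., bₙ) for every T ∈ M. -/

import Mathlib

open Function Filter Topology

/-- An `n`-norm on a real vector space `X` (axioms N1-N4). -/
structure NNorm (n : ℕ) (X : Type*) [AddCommGroup X] [Module ℝ X] where
  toFun : (Fin n → X) → ℝ
  eq_zero_iff : ∀ v : Fin n → X, toFun v = 0 ↔ ¬ LinearIndependent ℝ v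
  perm_invariant : ∀ (σ : Equiv.Perm (Fin n)) (v : Fin n → X), toFun (v ∘ σ) = toFun v
  smul_eq : ∀ (α : ℝ) (v : Fin n → X) (i : Fin n),
      toFun (Function.update v i (α • v i)) = |α| * toFun v
  add_le : ∀ (v : Fin n → X) (i : Fin n) (x y : X),
      toFun (Function.update v i (x + y)) ≤
        toFun (Function.update v i x) + toFun (Function.update v i y)

variable {n : ℕ} {X : Type*} [AddCommGroup X] [Module ℝ X]

/-- The seminorm `x ↦ ‖x, b₂, …, bₙ‖` obtained by fixing the vectors `b` in all slots
but the first. -/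
noncomputable def bsem (N : NNorm (n + 1) X) (b : Fin (n + 1) → X) (x : X) : ℝ :=
  N.toFun (Function.update b 0 x)

section Generic

variable {V : Type*} [AddCommGroup V] [Module ℝ V]

/-- A `b`-linear functional: additive and homogeneous in its first argument. -/
def IsBLinear (T : V → ℝ) : Prop :=
  (∀ x y : V, T (x + y) = T x + T y) ∧ ∀ (k : ℝ) (x : V), T (k • x) = k * T x

/-- A bounded `b`-linear functional with respect to a seminorm `p`. -/
def IsBddBLinearP (p : V → ℝ) (T : V → ℝ) : Prop :=
  IsBLinear T ∧ ∃ M > 0, ∀ x : V, |T x| ≤ M * p x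

/-- The norm of a bounded `b`-linear functional with respect to a seminorm `p`. -/
noncomputable def bnormP (p : V → ℝ) (T : V → ℝ) : ℝ :=
  sInf {M : ℝ | 0 < M ∧ ∀ x : V, |T x| ≤ M * p x}

end Generic

/-- A bounded `b`-linear functional on `X × ⟨b₂⟩ × ⋯ × ⟨bₙ⟩`. -/
def IsBddBLinear (N : NNorm (n + 1) X) (b : Fin (n + 1) → X) (T : X → ℝ) : Prop :=
  IsBddBLinearP (bsem N b) T

/-- The norm of a bounded `b`-linear functional on `X × ⟨b₂⟩ × ⋯ × ⟨bₙ⟩`. -/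
noncomputable def bnorm (N : NNorm (n + 1) X) (b : Fin (n + 1) → X) (T : X → ℝ) : ℝ :=
  bnormP (bsem N b) T

/-- Convergence of a sequence in a linear `n`-normed space. -/
def NConv (N : NNorm (n + 1) X) (u : ℕ → X) (x : X) : Prop :=
  ∀ v : Fin (n + 1) → X,
    Tendsto (fun k => N.toFun (Function.update v 0 (u k - x))) atTop (nhds 0)

/-- A subspace is closed if it contains all limits of its convergent sequences. -/
def IsClosedSub (N : NNorm (n + 1) X) (W : Submodule ℝ X) : Prop :=
  ∀ u : ℕ → X, (∀ k, u k ∈ W) → ∀ x : X, NConv N u x → x ∈ W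

/-- `b`-weak convergence of a sequence. -/
def BWeakConv (N : NNorm (n + 1) X) (b : Fin (n + 1) → X) (u : ℕ → X) (x : X) : Prop :=
  ∀ T : X → ℝ, IsBddBLinear N b T →
    Tendsto (fun k => T (u k)) atTop (nhds (T x))

/-- Uniform boundedness via Banach–Steinhaus for a seminormed structure given by `p`. -/
lemma ubp_aux {X : Type*} [AddCommGroup X] [Module ℝ X] (p : X → ℝ)
    (hp0 : p 0 = 0) (hpa : ∀ x y : X, p (x + y) ≤ p x + p y)
    (hps : ∀ (c : ℝ) (x : X), p (c • x) = |c| * p x)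
    (u : ℕ → X)
    (h : ∀ g : X →ₗ[ℝ] ℝ, ∀ B : ℝ, (∀ y, |g y| ≤ B * p y) → ∃ C, ∀ k, |g (u k)| ≤ C) :
    ∃ C, ∀ k, p (u k) ≤ C := by
  have hpneg : ∀ x : X, p (-x) = p x := by
    intro x
    have := hps (-1) x
    simpa using this
  have hpnonneg : ∀ x : X, 0 ≤ p x := by
    intro x
    have h1 : p (x + -x) ≤ p x + p (-x) := hpa x (-x)
    rw [add_neg_cancel, hp0, hpneg] at h1
    linarith
  letI : SeminormedAddCommGroup X :=
    AddGroupSeminorm.toSeminormedAddCommGroup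
      { toFun := p, map_zero' := hp0, add_le' := hpa, neg' := hpneg }
  letI : NormedSpace ℝ X := ⟨fun c x => le_of_eq (by
    show p (c • x) = ‖c‖ * p x
    rw [hps, Real.norm_eq_abs])⟩
  set g : ℕ → (X →L[ℝ] ℝ) →L[ℝ] ℝ := fun k => ContinuousLinearMap.apply ℝ ℝ (u k) with hg
  have hbdd : ∀ T : X →L[ℝ] ℝ, ∃ C, ∀ k, ‖g k T‖ ≤ C := by
    intro T
    obtain ⟨C, hC⟩ := h T.toLinearMap ‖T‖ (fun y => by
      have := T.le_opNorm y; rw [Real.norm_eq_abs] at this; exact this)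
    exact ⟨C, fun k => by simpa [hg, Real.norm_eq_abs] using hC k⟩
  obtain ⟨C', hC'⟩ := banach_steinhaus hbdd
  refine ⟨max C' 0, fun k => ?_⟩
  by_cases hu : u k = 0
  · rw [hu, hp0]; exact le_max_right _ _
  · -- Hahn–Banach: a functional attaining p (u k)
    have H : ∀ c : ℝ, c • u k = 0 → c • (p (u k)) = 0 := by
      intro c hc
      rcases smul_eq_zero.mp hc with rfl | h0
      · simp
      · exact absurd h0 hu
    have hfle : ∀ z : (LinearPMap.mkSpanSingleton' (σ := RingHom.id ℝ) (u k) (p (u k)) H).domain,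
        (LinearPMap.mkSpanSingleton' (σ := RingHom.id ℝ) (u k) (p (u k)) H) z ≤ p z := by
      rintro ⟨z, hz⟩
      have hz' : z ∈ Submodule.span ℝ {u k} := by
        rwa [LinearPMap.domain_mkSpanSingleton] at hz
      rcases Submodule.mem_span_singleton.mp hz' with ⟨c, rfl⟩
      rw [LinearPMap.mkSpanSingleton'_apply]
      calc c • p (u k) = c * p (u k) := rfl
        _ ≤ |c| * p (u k) := mul_le_mul_of_nonneg_right (le_abs_self c) (hpnonneg _)
        _ = p (c • u k) := (hps c (u k)).symm
    obtain ⟨G, hG1, hG2⟩ := exists_extension_of_le_sublinear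
      (LinearPMap.mkSpanSingleton' (σ := RingHom.id ℝ) (u k) (p (u k)) H) p
      (fun c hc x => by rw [hps]; rw [abs_of_pos hc]) hpa hfle
    have hGabs : ∀ y, |G y| ≤ p y := by
      intro y
      rw [abs_le]
      refine ⟨?_, hG2 y⟩
      have := hG2 (-y)
      rw [map_neg, hpneg] at this
      linarith
    have hGuk : G (u k) = p (u k) := by
      have hm : u k ∈ (LinearPMap.mkSpanSingleton' (σ := RingHom.id ℝ) (u k) (p (u k)) H).domain := by
        rw [LinearPMap.domain_mkSpanSingleton]
        exact Submodule.mem_span_singleton_self _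
      rw [show G (u k) = G ((⟨u k, hm⟩ : (LinearPMap.mkSpanSingleton' (σ := RingHom.id ℝ) (u k) (p (u k)) H).domain) : X) from rfl,
        hG1 ⟨u k, hm⟩, LinearPMap.mkSpanSingleton'_apply_self]
    set Gc : X →L[ℝ] ℝ := G.mkContinuous 1 (fun y => by
      rw [Real.norm_eq_abs, one_mul]; exact hGabs y) with hGc
    have hGcnorm : ‖Gc‖ ≤ 1 := G.mkContinuous_norm_le zero_le_one _
    have : p (u k) ≤ ‖g k Gc‖ := by
      rw [hg]
      simp only [ContinuousLinearMap.apply_apply]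
      rw [show Gc (u k) = G (u k) from rfl, hGuk, Real.norm_eq_abs]
      exact le_abs_self _
    calc p (u k) ≤ ‖g k Gc‖ := this
      _ ≤ ‖g k‖ * ‖Gc‖ := (g k).le_opNorm Gc
      _ ≤ C' * 1 := mul_le_mul (hC' k) hGcnorm (norm_nonneg _)
          (le_trans (norm_nonneg _) (hC' k))
      _ ≤ max C' 0 := by rw [mul_one]; exact le_max_left _ _

section BsemLemmas

variable {n : ℕ} {X : Type*} [AddCommGroup X] [Module ℝ X]

lemma bsem_add (N : NNorm (n + 1) X) (b : Fin (n + 1) → X) (x y : X) :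
    bsem N b (x + y) ≤ bsem N b x + bsem N b y :=
  N.add_le b 0 x y

lemma bsem_smul (N : NNorm (n + 1) X) (b : Fin (n + 1) → X) (c : ℝ) (x : X) :
    bsem N b (c • x) = |c| * bsem N b x := by
  have h := N.smul_eq c (Function.update b 0 x) 0
  rw [Function.update_self] at h
  rw [Function.update_idem] at h
  exact h

lemma bsem_zero (N : NNorm (n + 1) X) (b : Fin (n + 1) → X) :
    bsem N b 0 = 0 := by
  have := bsem_smul N b 0 0
  simpa using this

lemma bsem_neg (N : NNorm (n + 1) X) (b : Fin (n + 1) → X) (x : X) :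
    bsem N b (-x) = bsem N b x := by
  have := bsem_smul N b (-1) x
  simpa using this

lemma bsem_nonneg (N : NNorm (n + 1) X) (b : Fin (n + 1) → X) (x : X) :
    0 ≤ bsem N b x := by
  have h := bsem_add N b x (-x)
  rw [add_neg_cancel, bsem_zero, bsem_neg] at h
  linarith

/-- Every element of the span of a set of bounded b-linear functionals is bounded b-linear. -/
lemma span_isBddBLinear (N : NNorm (n + 1) X) (b : Fin (n + 1) → X)
    (M : Set (X → ℝ)) (hM : ∀ S ∈ M, IsBddBLinear N b S) :
    ∀ S ∈ Submodule.span ℝ M, IsBddBLinear N b S := by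
  intro S hS
  induction hS using Submodule.span_induction with
  | mem S hSm => exact hM S hSm
  | zero =>
      refine ⟨⟨fun x y => by simp, fun k x => by simp⟩, 1, one_pos, fun y => by
        simpa using bsem_nonneg N b y⟩
  | add S1 S2 _ _ h1 h2 =>
      obtain ⟨⟨ha1, hh1⟩, M1, hM1, hb1⟩ := h1
      obtain ⟨⟨ha2, hh2⟩, M2, hM2, hb2⟩ := h2
      refine ⟨⟨fun x y => by simp [Pi.add_apply, ha1, ha2]; ring,
        fun k x => by simp [Pi.add_apply, hh1, hh2]; ring⟩,
        M1 + M2, by linarith, fun y => ?_⟩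
      calc |(S1 + S2) y| = |S1 y + S2 y| := rfl
        _ ≤ |S1 y| + |S2 y| := abs_add_le _ _
        _ ≤ M1 * bsem N b y + M2 * bsem N b y := add_le_add (hb1 y) (hb2 y)
        _ = (M1 + M2) * bsem N b y := by ring
  | smul c S _ h1 =>
      obtain ⟨⟨ha1, hh1⟩, M1, hM1, hb1⟩ := h1
      refine ⟨⟨fun x y => by simp [Pi.smul_apply, ha1]; ring,
        fun k x => by simp [Pi.smul_apply, hh1]; ring⟩,
        |c| * M1 + 1, by positivity, fun y => ?_⟩
      calc |(c • S) y| = |c| * |S y| := by rw [Pi.smul_apply, smul_eq_mul, abs_mul]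
        _ ≤ |c| * (M1 * bsem N b y) :=
            mul_le_mul_of_nonneg_left (hb1 y) (abs_nonneg c)
        _ ≤ (|c| * M1 + 1) * bsem N b y := by
            have := bsem_nonneg N b y; nlinarith

end BsemLemmas
theorem stmt13 (N : NNorm (n + 1) X) (b : Fin (n + 1) → X)
    (hdim : ↑(n + 1) ≤ Module.rank ℝ X) (M : Set (X → ℝ))
    (hM : ∀ S ∈ M, IsBddBLinear N b S)
    (htotal : ∀ T : X → ℝ, IsBddBLinear N b T → ∀ ε > (0 : ℝ),
      ∃ S ∈ Submodule.span ℝ M, bnorm N b (T - S) < ε)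
    (u : ℕ → X) (x : X) :
    BWeakConv N b u x ↔
      ((∃ C : ℝ, ∀ k, bsem N b (u k) ≤ C) ∧
        ∀ T ∈ M, Tendsto (fun k => T (u k)) atTop (nhds (T x))) := by
  constructor
  · intro h
    refine ⟨?_, fun T hT => h T (hM T hT)⟩
    apply ubp_aux (bsem N b) (bsem_zero N b) (bsem_add N b) (bsem_smul N b) u
    intro g B hB
    have hT : IsBddBLinear N b ⇑g := by
      refine ⟨⟨fun a y => map_add g a y, fun c a => by rw [map_smul]; rfl⟩,
        max B 1, lt_of_lt_of_le one_pos (le_max_right _ _), fun y => ?_⟩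
      exact le_trans (hB y)
        (mul_le_mul_of_nonneg_right (le_max_left _ _) (bsem_nonneg N b y))
    have ht : Tendsto (fun k => |g (u k)|) atTop (nhds |g x|) := (h (⇑g) hT).abs
    obtain ⟨C, hC⟩ := ht.bddAbove_range
    exact ⟨C, fun k => hC (Set.mem_range_self k)⟩
  · rintro ⟨⟨C, hC⟩, hMconv⟩ T hT
    have habs : ∀ a c : ℝ, |a - c| ≤ |a| + |c| := fun a c => by
      rw [sub_eq_add_neg]
      exact (abs_add_le a (-c)).trans_eq (by rw [abs_neg])
    have hC0 : 0 ≤ C := le_trans (bsem_nonneg N b (u 0)) (hC 0)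
    have hspan : ∀ S ∈ Submodule.span ℝ M,
        Tendsto (fun k => S (u k)) atTop (nhds (S x)) := by
      intro S hS
      induction hS using Submodule.span_induction with
      | mem S hSm => exact hMconv S hSm
      | zero => simpa using (tendsto_const_nhds : Tendsto (fun _ : ℕ => (0:ℝ)) atTop _)
      | add S1 S2 _ _ g1 g2 => simpa [Pi.add_apply] using g1.add g2
      | smul c S _ g1 => simpa [Pi.smul_apply, smul_eq_mul] using g1.const_mul c
    rw [Metric.tendsto_atTop]
    intro ε hε
    set D := C + bsem N b x + 1 with hD
    have hpx := bsem_nonneg N b x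
    have hD0 : 0 < D := by rw [hD]; linarith
    set δ := ε / (3 * D) with hδ
    have hδ0 : 0 < δ := by positivity
    obtain ⟨S, hSspan, hSnorm⟩ := htotal T hT δ hδ0
    have hSb : IsBddBLinear N b S := span_isBddBLinear N b M hM S hSspan
    have hTS : IsBddBLinear N b (T - S) := by
      obtain ⟨⟨ha1, hh1⟩, M1, hM1, hb1⟩ := hT
      obtain ⟨⟨ha2, hh2⟩, M2, hM2, hb2⟩ := hSb
      refine ⟨⟨fun a y => by simp only [Pi.sub_apply, ha1, ha2]; ring,
        fun c a => by simp only [Pi.sub_apply, hh1, hh2]; ring⟩,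
        M1 + M2, by linarith, fun y => ?_⟩
      calc |(T - S) y| = |T y - S y| := rfl
        _ ≤ |T y| + |S y| := habs _ _
        _ ≤ M1 * bsem N b y + M2 * bsem N b y := add_le_add (hb1 y) (hb2 y)
        _ = (M1 + M2) * bsem N b y := by ring
    have hpt : ∀ y, |(T - S) y| ≤ δ * bsem N b y := by
      obtain ⟨hlin, M0, hM0, hb0⟩ := hTS
      have hne : {M : ℝ | 0 < M ∧ ∀ y, |(T - S) y| ≤ M * bsem N b y}.Nonempty :=
        ⟨M0, hM0, hb0⟩
      have hbdd : BddBelow {M : ℝ | 0 < M ∧ ∀ y, |(T - S) y| ≤ M * bsem N b y} :=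
        ⟨0, fun m hm => le_of_lt hm.1⟩
      have hs : sInf {M : ℝ | 0 < M ∧ ∀ y, |(T - S) y| ≤ M * bsem N b y} < δ := hSnorm
      obtain ⟨M1, hM1mem, hM1lt⟩ := (csInf_lt_iff hbdd hne).mp hs
      intro y
      exact le_trans (hM1mem.2 y)
        (mul_le_mul_of_nonneg_right hM1lt.le (bsem_nonneg N b y))
    have hStend := hspan S hSspan
    rw [Metric.tendsto_atTop] at hStend
    obtain ⟨K, hK⟩ := hStend (ε / 3) (by positivity)
    refine ⟨K, fun k hk => ?_⟩
    have h1 := hpt (u k)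
    have h2 := hpt x
    have h3 := hK k hk
    rw [Real.dist_eq] at h3 ⊢
    have e1 : T (u k) - T x = ((T - S) (u k) - (T - S) x) + (S (u k) - S x) := by
      simp only [Pi.sub_apply]; ring
    have hδD : δ * D = ε / 3 := by
      rw [hδ]; field_simp
    have e2 : δ * C + δ * bsem N b x = ε / 3 - δ := by
      rw [← hδD, hD]; ring
    have hb1 : |(T - S) (u k)| ≤ δ * C :=
      le_trans h1 (mul_le_mul_of_nonneg_left (hC k) hδ0.le)
    calc |T (u k) - T x|
        = |((T - S) (u k) - (T - S) x) + (S (u k) - S x)| := by rw [e1]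
      _ ≤ |(T - S) (u k) - (T - S) x| + |S (u k) - S x| := abs_add_le _ _
      _ ≤ (|(T - S) (u k)| + |(T - S) x|) + |S (u k) - S x| :=
          add_le_add (habs _ _) le_rfl
      _ ≤ (δ * C + δ * bsem N b x) + ε / 3 :=
          add_le_add (add_le_add hb1 h2) h3.le
      _ < ε := by rw [e2]; linarith
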